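/- For any pure state |ψ⟩ on n qubits, the number of Pauli strings P with P|ψ⟩ = ±|ψ⟩ is at most d²/card(|ψ⟩), where card(|ψ⟩) is the number of Pauli strings with nonzero expectation ⟨ψ|P|ψ⟩ ≠ 0. -/

import Mathlib

open Matrix BigOperators

/-- The four single-qubit Pauli matrices I, X, Y, Z. -/
noncomputable def pauli : Fin 4 → Matrix (Fin 2) (Fin 2) ℂ :=
  ![1, !![0, 1; 1, 0], !![0, -Complex.I; Complex.I, 0], !![1, 0; 0, -1]]

/-- The n-qubit Pauli string labelled by a : Fin n → Fin 4, acting on (ℂ²)^⊗n realized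
as functions (Fin n → Fin 2) → ℂ; its (x,y) entry is the product of single-qubit entries. -/
noncomputable def PauliString (n : ℕ) (a : Fin n → Fin 4) :
    Matrix (Fin n → Fin 2) (Fin n → Fin 2) ℂ :=
  Matrix.of fun x y => ∏ j, pauli (a j) (x j) (y j)


def kl : Fin 4 → Fin 4 → Fin 4 :=
  ![![0,1,2,3], ![1,0,3,2], ![2,3,0,1], ![3,2,1,0]]

def om : Fin 4 → Fin 4 → ZMod 2 :=
  ![![0,0,0,0], ![0,0,1,1], ![0,1,0,1], ![0,1,1,0]]

noncomputable def ph : Fin 4 → Fin 4 → ℂ :=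
  ![![1,1,1,1], ![1,1,Complex.I,-Complex.I], ![1,-Complex.I,1,Complex.I], ![1,Complex.I,-Complex.I,1]]

noncomputable def sg : ZMod 2 → ℂ := fun t => if t = 0 then 1 else -1

lemma pauli_mul (a b : Fin 4) : pauli a * pauli b = ph a b • pauli (kl a b) := by
  fin_cases a <;> fin_cases b <;>
    · ext i j
      fin_cases i <;> fin_cases j <;>
        simp [pauli, ph, kl, Matrix.mul_apply, Fin.sum_univ_two, Complex.ext_iff, Matrix.vecHead, Matrix.vecTail]

lemma pauli_conjT (a : Fin 4) : (pauli a)ᴴ = pauli a := by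
  fin_cases a <;>
    · ext i j
      fin_cases i <;> fin_cases j <;> simp [pauli, Complex.ext_iff, Matrix.vecHead, Matrix.vecTail]

lemma ph_comm (a b : Fin 4) : ph b a = sg (om a b) * ph a b := by
  fin_cases a <;> fin_cases b <;> simp [ph, om, sg, Matrix.vecHead, Matrix.vecTail]

lemma kl_zero_left : ∀ b : Fin 4, kl 0 b = b := by decide
lemma kl_self : ∀ a : Fin 4, kl a a = 0 := by decide
lemma kl_cancel : ∀ a b : Fin 4, kl (kl a b) b = a := by decide
lemma om_zero_right : ∀ a : Fin 4, om a 0 = 0 := by decide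
lemma om_add_left : ∀ a b c : Fin 4, om (kl a b) c = om a c + om b c := by decide
lemma om_add_right : ∀ a b c : Fin 4, om a (kl b c) = om a b + om a c := by decide
lemma om_nondeg (a : Fin 4) (h : a ≠ 0) : ∃ b, om a b = 1 := by
  fin_cases a
  · exact absurd rfl h
  · exact ⟨2, by decide⟩
  · exact ⟨1, by decide⟩
  · exact ⟨1, by decide⟩
lemma ph_self (a : Fin 4) : ph a a = 1 := by fin_cases a <;> simp [ph, Matrix.vecHead, Matrix.vecTail]
lemma ph_ne_zero (a b : Fin 4) : ph a b ≠ 0 := by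
  fin_cases a <;> fin_cases b <;> simp [ph, Matrix.vecHead, Matrix.vecTail, Complex.I_ne_zero]
lemma sg_add (x y : ZMod 2) : sg (x + y) = sg x * sg y := by
  rcases (show ∀ z : ZMod 2, z = 0 ∨ z = 1 by decide) x with rfl | rfl <;>
  rcases (show ∀ z : ZMod 2, z = 0 ∨ z = 1 by decide) y with rfl | rfl <;>
    simp [sg, show (1+1 : ZMod 2) = 0 from rfl, show (1 : ZMod 2) ≠ 0 by decide]

noncomputable def sgZ : ZMod 2 → ℤ := fun t => if t = 0 then 1 else -1
lemma sgZ_add : ∀ x y : ZMod 2, sgZ (x + y) = sgZ x * sgZ y := by decide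

lemma PauliString_mul (n : ℕ) (a b : Fin n → Fin 4) :
    PauliString n a * PauliString n b =
      (∏ j, ph (a j) (b j)) • PauliString n (fun j => kl (a j) (b j)) := by
  ext x y
  simp only [Matrix.mul_apply, PauliString, Matrix.of_apply, Matrix.smul_apply, smul_eq_mul]
  have h1 : ∀ z : Fin n → Fin 2,
      (∏ j, pauli (a j) (x j) (z j)) * ∏ j, pauli (b j) (z j) (y j)
        = ∏ j, pauli (a j) (x j) (z j) * pauli (b j) (z j) (y j) := fun z =>
    (Finset.prod_mul_distrib).symm
  rw [Finset.sum_congr rfl (fun z _ => h1 z)]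
  have h2 : (∑ z : Fin n → Fin 2, ∏ j, pauli (a j) (x j) (z j) * pauli (b j) (z j) (y j))
      = ∏ j, ∑ t : Fin 2, pauli (a j) (x j) t * pauli (b j) t (y j) := by
    rw [Finset.prod_univ_sum]
    exact (Finset.sum_congr rfl fun z _ => rfl)
  rw [h2]
  have h3 : ∀ j, (∑ t : Fin 2, pauli (a j) (x j) t * pauli (b j) t (y j))
      = ph (a j) (b j) * pauli (kl (a j) (b j)) (x j) (y j) := by
    intro j
    have := congrFun (congrFun (pauli_mul (a j) (b j)) (x j)) (y j)
    simpa [Matrix.mul_apply] using this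
  rw [Finset.prod_congr rfl (fun j _ => h3 j), Finset.prod_mul_distrib]

lemma PauliString_zero (n : ℕ) : PauliString n (fun _ => 0) = 1 := by
  ext x y
  simp only [PauliString, Matrix.of_apply]
  have : ∀ j : Fin n, pauli 0 (x j) (y j) = if x j = y j then 1 else 0 := by
    intro j; simp [pauli, Matrix.one_apply]
  rw [Finset.prod_congr rfl (fun j _ => this j)]
  by_cases h : x = y
  · subst h; simp [Matrix.one_apply]
  · obtain ⟨j, hj⟩ := Function.ne_iff.mp h
    rw [Matrix.one_apply_ne h]
    exact Finset.prod_eq_zero (Finset.mem_univ j) (by simp [hj])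

lemma PauliString_conjT (n : ℕ) (a : Fin n → Fin 4) :
    (PauliString n a)ᴴ = PauliString n a := by
  ext x y
  simp only [Matrix.conjTranspose_apply, PauliString, Matrix.of_apply, star_prod]
  refine Finset.prod_congr rfl fun j _ => ?_
  have := congrFun (congrFun (pauli_conjT (a j)) (x j)) (y j)
  simpa [Matrix.conjTranspose_apply] using this

lemma PauliString_sq (n : ℕ) (a : Fin n → Fin 4) :
    PauliString n a * PauliString n a = 1 := by
  rw [PauliString_mul]
  simp [ph_self, kl_self, PauliString_zero]

def omv {n : ℕ} (a b : Fin n → Fin 4) : ZMod 2 := ∑ j, om (a j) (b j)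

lemma omv_add_left {n : ℕ} (a a' b : Fin n → Fin 4) :
    omv (fun j => kl (a j) (a' j)) b = omv a b + omv a' b := by
  simp only [omv, om_add_left, Finset.sum_add_distrib]

lemma omv_add_right {n : ℕ} (a b b' : Fin n → Fin 4) :
    omv a (fun j => kl (b j) (b' j)) = omv a b + omv a b' := by
  simp only [omv, om_add_right, Finset.sum_add_distrib]

lemma omv_nondeg {n : ℕ} (a : Fin n → Fin 4) (h : a ≠ (fun _ => 0)) :
    ∃ b, omv a b = 1 := by
  obtain ⟨j, hj⟩ := Function.ne_iff.mp h
  obtain ⟨t, ht⟩ := om_nondeg (a j) hj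
  classical
  refine ⟨fun i => if i = j then t else 0, ?_⟩
  rw [omv, Finset.sum_eq_single j]
  · simp [ht]
  · intro i _ hi; simp [hi, om_zero_right]
  · simp

lemma sum_sgZ_zero {G : Type*} [DecidableEq G] (s : Finset G) (f : G → ZMod 2) (σ : G → G)
    (hmap : ∀ a ∈ s, σ a ∈ s) (hinv : ∀ a ∈ s, σ (σ a) = a)
    (hf : ∀ a ∈ s, f (σ a) = f a + 1) : ∑ a ∈ s, sgZ (f a) = 0 := by
  have h : ∑ a ∈ s, sgZ (f a) = ∑ a ∈ s, sgZ (f (σ a)) :=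
    Finset.sum_nbij' σ σ hmap hmap hinv hinv
      (fun a ha => by rw [hinv a ha])
  have h2 : ∑ a ∈ s, sgZ (f (σ a)) = - ∑ a ∈ s, sgZ (f a) := by
    rw [← Finset.sum_neg_distrib]
    refine Finset.sum_congr rfl fun a ha => ?_
    rw [hf a ha, sgZ_add]
    simp [sgZ]
  omega

lemma counting {n : ℕ} (S C : Finset (Fin n → Fin 4)) (hS0 : (fun _ => 0) ∈ S)
    (hScl : ∀ a ∈ S, ∀ b ∈ S, (fun j => kl (a j) (b j)) ∈ S)
    (hperp : ∀ a ∈ S, ∀ b ∈ C, omv a b = 0) :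
    S.card * C.card ≤ 4 ^ n := by
  classical
  have hne : ∀ x : ZMod 2, x ≠ 0 → x = 1 := by decide
  set T : ℤ := ∑ b : Fin n → Fin 4, ∑ a ∈ S, sgZ (omv a b) with hT
  have key_inner : ∀ b : Fin n → Fin 4, 0 ≤ ∑ a ∈ S, sgZ (omv a b) := by
    intro b
    by_cases hb : ∀ a ∈ S, omv a b = 0
    · have : ∑ a ∈ S, sgZ (omv a b) = S.card := by
        rw [Finset.sum_congr rfl (fun a ha => by rw [hb a ha])]
        simp [sgZ]
      rw [this]; positivity
    · push_neg at hb
      obtain ⟨a₀, ha₀S, ha₀⟩ := hb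
      have hz := sum_sgZ_zero S (fun a => omv a b) (fun a => fun j => kl (a j) (a₀ j))
        (fun a ha => hScl a ha a₀ ha₀S)
        (fun a _ => funext fun j => kl_cancel (a j) (a₀ j))
        (fun a _ => by simp only [omv_add_left, hne _ ha₀])
      rw [hz]
  have lower : (C.card : ℤ) * S.card ≤ T := by
    rw [hT]
    have hc : ∀ b ∈ C, (S.card : ℤ) = ∑ a ∈ S, sgZ (omv a b) := by
      intro b hb
      rw [Finset.sum_congr rfl (fun a ha => by rw [hperp a ha b hb])]
      simp [sgZ]
    calc (C.card : ℤ) * S.card = ∑ _b ∈ C, (S.card : ℤ) := by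
          rw [Finset.sum_const, nsmul_eq_mul]
      _ = ∑ b ∈ C, ∑ a ∈ S, sgZ (omv a b) := Finset.sum_congr rfl hc
      _ ≤ ∑ b : Fin n → Fin 4, ∑ a ∈ S, sgZ (omv a b) :=
          Finset.sum_le_sum_of_subset_of_nonneg (Finset.subset_univ C)
            (fun b _ _ => key_inner b)
  have upper : T = 4 ^ n := by
    rw [hT, Finset.sum_comm]
    have h0 : ∀ t : Fin 4, om 0 t = 0 := by decide
    have inner : ∀ a : Fin n → Fin 4, a ∈ S → (∑ b : Fin n → Fin 4, sgZ (omv a b))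
        = if a = (fun _ => 0) then (4 ^ n : ℤ) else 0 := by
      intro a _
      by_cases ha : a = (fun _ => 0)
      · rw [if_pos ha]
        subst ha
        have hz : ∀ b : Fin n → Fin 4, omv (fun _ => 0) b = 0 := fun b =>
          Finset.sum_eq_zero fun j _ => h0 (b j)
        rw [Finset.sum_congr rfl (fun b _ => by rw [hz b])]
        simp only [sgZ, if_pos rfl, Finset.sum_const, Finset.card_univ, Fintype.card_fun,
          Fintype.card_fin, nsmul_eq_mul, mul_one]
        push_cast
        ring
      · rw [if_neg ha]
        obtain ⟨b₀, hb₀⟩ := omv_nondeg a ha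
        exact sum_sgZ_zero Finset.univ (fun b => omv a b) (fun b => fun j => kl (b j) (b₀ j))
          (fun _ _ => Finset.mem_univ _)
          (fun b _ => funext fun j => kl_cancel (b j) (b₀ j))
          (fun b _ => by simp only [omv_add_right, hb₀])
    rw [Finset.sum_congr rfl inner, Finset.sum_ite_eq' S]
    rw [if_pos hS0]
  rw [upper] at lower
  have h4 : (S.card : ℤ) * C.card ≤ (4 : ℤ) ^ n := by linarith
  exact_mod_cast h4

lemma sg_sum {ι : Type*} (s : Finset ι) (f : ι → ZMod 2) :
    ∏ j ∈ s, sg (f j) = sg (∑ j ∈ s, f j) := by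
  classical
  induction s using Finset.cons_induction with
  | empty => simp [sg]
  | cons a s ha ih => rw [Finset.prod_cons, Finset.sum_cons, ih, sg_add]

section state
variable {n : ℕ} {ψ : (Fin n → Fin 2) → ℂ}

lemma psi_ne (hψ : star ψ ⬝ᵥ ψ = 1) : ψ ≠ 0 := by
  intro h; rw [h] at hψ; simp at hψ

lemma herm_move (a : Fin n → Fin 4) (v : (Fin n → Fin 2) → ℂ) :
    star ψ ⬝ᵥ (PauliString n a).mulVec v = star ((PauliString n a).mulVec ψ) ⬝ᵥ v := by
  rw [Matrix.dotProduct_mulVec, Matrix.star_mulVec, PauliString_conjT]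

/-- stabilizer elements have eigenvalue ±1 -/
lemma stab_eig {a : Fin n → Fin 4}
    (ha : (PauliString n a).mulVec ψ = ψ ∨ (PauliString n a).mulVec ψ = -ψ) :
    ∃ ε : ℂ, (ε = 1 ∨ ε = -1) ∧ (PauliString n a).mulVec ψ = ε • ψ := by
  rcases ha with h | h
  · exact ⟨1, Or.inl rfl, by simpa using h⟩
  · exact ⟨-1, Or.inr rfl, by simpa [neg_smul] using h⟩

lemma stab_closed (hψ : star ψ ⬝ᵥ ψ = 1) {a b : Fin n → Fin 4}
    (ha : (PauliString n a).mulVec ψ = ψ ∨ (PauliString n a).mulVec ψ = -ψ)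
    (hb : (PauliString n b).mulVec ψ = ψ ∨ (PauliString n b).mulVec ψ = -ψ) :
    (PauliString n (fun j => kl (a j) (b j))).mulVec ψ = ψ ∨
      (PauliString n (fun j => kl (a j) (b j))).mulVec ψ = -ψ := by
  obtain ⟨ε, hε, hae⟩ := stab_eig ha
  obtain ⟨δ, hδ, hbe⟩ := stab_eig hb
  set μ : ℂ := ∏ j, ph (a j) (b j) with hμ
  have hμ0 : μ ≠ 0 := Finset.prod_ne_zero_iff.mpr fun j _ => ph_ne_zero _ _
  set c : Fin n → Fin 4 := fun j => kl (a j) (b j) with hc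
  have h1 : μ • (PauliString n c).mulVec ψ = (ε * δ) • ψ := by
    have := congrArg (fun M => Matrix.mulVec M ψ) (PauliString_mul n a b)
    simp only [Matrix.smul_mulVec] at this
    rw [← this, ← Matrix.mulVec_mulVec, hbe, Matrix.mulVec_smul, hae, smul_smul, mul_comm]
  have h2 : (PauliString n c).mulVec ψ = (μ⁻¹ * (ε * δ)) • ψ := by
    have := congrArg (fun v => μ⁻¹ • v) h1
    simpa [smul_smul, inv_mul_cancel₀ hμ0] using this
  set lam : ℂ := μ⁻¹ * (ε * δ) with hlam
  have hsq : (lam ^ 2) • ψ = ψ := by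
    have h3 : (PauliString n c).mulVec ((PauliString n c).mulVec ψ) = ψ := by
      rw [Matrix.mulVec_mulVec, PauliString_sq, Matrix.one_mulVec]
    calc (lam ^ 2) • ψ = lam • (lam • ψ) := by rw [smul_smul]; ring_nf
      _ = lam • ((PauliString n c).mulVec ψ) := by rw [h2]
      _ = (PauliString n c).mulVec (lam • ψ) := by rw [Matrix.mulVec_smul]
      _ = (PauliString n c).mulVec ((PauliString n c).mulVec ψ) := by rw [h2]
      _ = ψ := h3
  have hlam2 : lam ^ 2 = 1 := by
    have hψ0 := psi_ne hψ
    have : (lam ^ 2 - 1) • ψ = 0 := by rw [sub_smul, hsq, one_smul, sub_self]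
    rcases smul_eq_zero.mp this with h | h
    · linear_combination h
    · exact absurd h hψ0
  have : (lam - 1) * (lam + 1) = 0 := by linear_combination hlam2
  rcases mul_eq_zero.mp this with h | h
  · left; rw [h2, show lam = 1 by linear_combination h, one_smul]
  · right; rw [h2, show lam = -1 by linear_combination h]
    simp [neg_smul]

lemma stab_perp (hψ : star ψ ⬝ᵥ ψ = 1) {a b : Fin n → Fin 4}
    (ha : (PauliString n a).mulVec ψ = ψ ∨ (PauliString n a).mulVec ψ = -ψ)
    (hb : star ψ ⬝ᵥ (PauliString n b).mulVec ψ ≠ 0) :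
    omv a b = 0 := by
  obtain ⟨ε, hε, hae⟩ := stab_eig ha
  have hε0 : ε ≠ 0 := by rcases hε with h | h <;> simp [h]
  have hεstar : star ε = ε := by rcases hε with h | h <;> simp [h]
  set μ : ℂ := ∏ j, ph (a j) (b j) with hμ
  set c : Fin n → Fin 4 := fun j => kl (a j) (b j) with hc
  set cv : ℂ := star ψ ⬝ᵥ (PauliString n c).mulVec ψ with hcv
  set e : ℂ := star ψ ⬝ᵥ (PauliString n b).mulVec ψ with he
  -- X = ⟨ψ, P_a P_b ψ⟩
  have hX1 : star ψ ⬝ᵥ (PauliString n a * PauliString n b).mulVec ψ = μ * cv := by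
    rw [PauliString_mul, Matrix.smul_mulVec, dotProduct_smul]
    rfl
  have hX2 : star ψ ⬝ᵥ (PauliString n a * PauliString n b).mulVec ψ = ε * e := by
    rw [← Matrix.mulVec_mulVec, herm_move, hae]
    rw [star_smul, smul_dotProduct, hεstar, he, smul_eq_mul]
  -- Y = ⟨ψ, P_b P_a ψ⟩
  have hY1 : star ψ ⬝ᵥ (PauliString n b * PauliString n a).mulVec ψ
      = sg (omv a b) * (μ * cv) := by
    rw [PauliString_mul, Matrix.smul_mulVec, dotProduct_smul]
    have hcomm : (∏ j, ph (b j) (a j)) = sg (omv a b) * μ := by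
      calc ∏ j, ph (b j) (a j)
          = ∏ j, (sg (om (a j) (b j)) * ph (a j) (b j)) :=
            Finset.prod_congr rfl (fun j _ => ph_comm (a j) (b j))
        _ = (∏ j, sg (om (a j) (b j))) * ∏ j, ph (a j) (b j) := Finset.prod_mul_distrib
        _ = sg (omv a b) * μ := by rw [sg_sum, hμ]; rfl
    have hck : (fun j => kl (b j) (a j)) = c := by
      funext j; rw [hc]; revert j; intro j
      have : ∀ x y : Fin 4, kl x y = kl y x := by decide
      exact this (b j) (a j)
    rw [hck, hcomm, smul_eq_mul, mul_assoc]
  have hY2 : star ψ ⬝ᵥ (PauliString n b * PauliString n a).mulVec ψ = ε * e := by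
    rw [← Matrix.mulVec_mulVec, hae, Matrix.mulVec_smul]
    rw [dotProduct_smul, he, smul_eq_mul]
  by_contra hne
  have h1 : omv a b = 1 := by
    have : ∀ x : ZMod 2, x ≠ 0 → x = 1 := by decide
    exact this _ hne
  rw [h1] at hY1
  have hsg : sg (1 : ZMod 2) = -1 := by norm_num [sg]
  rw [hsg] at hY1
  have : ε * e = - (ε * e) := by
    linear_combination hX1 - hX2 + hY1 - hY2
  have h2 : ε * e = 0 := by linear_combination (1/2 : ℂ) * this
  exact hb ((mul_eq_zero.mp h2).resolve_left hε0)

end state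


/-- For any pure state |ψ⟩ on n qubits (d = 2^n), the number of Pauli
strings with P|ψ⟩ = ±|ψ⟩ is at most d² / card(|ψ⟩), where card(|ψ⟩) is the number of
Pauli strings with nonzero expectation ⟨ψ|P|ψ⟩ ≠ 0. -/
theorem stmt_4 (n : ℕ) (ψ : (Fin n → Fin 2) → ℂ) (hψ : star ψ ⬝ᵥ ψ = 1) :
    (Set.ncard {a : Fin n → Fin 4 |
        (PauliString n a).mulVec ψ = ψ ∨ (PauliString n a).mulVec ψ = -ψ} : ℝ) ≤
      ((2 ^ n : ℝ) ^ 2) /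
        (Set.ncard {a : Fin n → Fin 4 | star ψ ⬝ᵥ (PauliString n a).mulVec ψ ≠ 0} : ℝ) := by
  classical
  set Sset : Set (Fin n → Fin 4) :=
    {a | (PauliString n a).mulVec ψ = ψ ∨ (PauliString n a).mulVec ψ = -ψ} with hSset
  set Cset : Set (Fin n → Fin 4) :=
    {a | star ψ ⬝ᵥ (PauliString n a).mulVec ψ ≠ 0} with hCset
  have hSfin : Sset.Finite := Set.toFinite _
  have hCfin : Cset.Finite := Set.toFinite _
  set SF := hSfin.toFinset with hSF
  set CF := hCfin.toFinset with hCF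
  have hScard : Sset.ncard = SF.card := by
    rw [hSF]; exact (Set.ncard_eq_toFinset_card Sset hSfin)
  have hCcard : Cset.ncard = CF.card := by
    rw [hCF]; exact (Set.ncard_eq_toFinset_card Cset hCfin)
  -- identity string
  have hid : (PauliString n (fun _ => 0)).mulVec ψ = ψ := by
    rw [PauliString_zero, Matrix.one_mulVec]
  have hS0 : (fun _ => 0) ∈ SF := by
    rw [hSF, Set.Finite.mem_toFinset]; exact Or.inl hid
  have hC0 : (fun _ => 0) ∈ CF := by
    rw [hCF, Set.Finite.mem_toFinset]
    show star ψ ⬝ᵥ (PauliString n (fun _ => 0)).mulVec ψ ≠ 0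
    rw [hid, hψ]; exact one_ne_zero
  have hmain : SF.card * CF.card ≤ 4 ^ n := by
    apply counting
    · exact hS0
    · intro a ha b hb
      rw [hSF, Set.Finite.mem_toFinset] at ha hb ⊢
      exact stab_closed hψ ha hb
    · intro a ha b hb
      rw [hSF, Set.Finite.mem_toFinset] at ha
      rw [hCF, Set.Finite.mem_toFinset] at hb
      exact stab_perp hψ ha hb
  have hCpos : 0 < CF.card := Finset.card_pos.mpr ⟨_, hC0⟩
  rw [hScard, hCcard]
  rw [le_div_iff₀ (by exact_mod_cast hCpos)]
  have : ((SF.card : ℝ)) * (CF.card : ℝ) ≤ ((4 : ℝ)) ^ n := by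
    exact_mod_cast hmain
  calc ((SF.card : ℝ)) * (CF.card : ℝ) ≤ ((4 : ℝ)) ^ n := this
    _ = ((2 : ℝ) ^ n) ^ 2 := by
      rw [← pow_mul, show (4:ℝ) = 2 ^ 2 by norm_num, ← pow_mul, mul_comm]
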